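/- arXiv:2312.10331 — 3 statements merged into one kernel-verified Lean document; each statement's English description precedes it below -/
import Mathlib

section
/- Let p ∈ [0,1] be a true probability and let q_A, q_B be real random variables with E[q_A] = E[q_B] = p, with variances σ_A² and σ_B² respectively (possibly dependent). Define r = (q_A + q_B)/2 and let the gain to A be G = κ(q_A − r)(p − r) for a constant κ > 0. Then E[G] = (κ/4)(σ_B² − σ_A²). -/
open MeasureTheory

theorem gentlemans_bet
    {Ω : Type*} [MeasurableSpace Ω] (μ : Measure Ω) [IsProbabilityMeasure μ]
    (p κ σA σB : ℝ) (hp : p ∈ Set.Icc (0:ℝ) 1) (hκ : 0 < κ)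
    (qA qB : Ω → ℝ)
    (hA : Integrable qA μ) (hB : Integrable qB μ)
    (hA2 : Integrable (fun ω => (qA ω)^2) μ)
    (hB2 : Integrable (fun ω => (qB ω)^2) μ)
    (hAB : Integrable (fun ω => qA ω * qB ω) μ)
    (hmA : ∫ ω, qA ω ∂μ = p) (hmB : ∫ ω, qB ω ∂μ = p)
    (hvA : ∫ ω, (qA ω - p)^2 ∂μ = σA^2)
    (hvB : ∫ ω, (qB ω - p)^2 ∂μ = σB^2) :
    ∫ ω, κ * (qA ω - (qA ω + qB ω)/2) * (p - (qA ω + qB ω)/2) ∂μ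
      = (κ/4) * (σB^2 - σA^2) := by
  have hA' : Integrable (fun ω => (qA ω - p)^2) μ := by
    have : (fun ω => (qA ω - p)^2) =
        fun ω => (qA ω)^2 - (2*p) * qA ω + p^2 := by
      funext ω; ring
    rw [this]
    exact ((hA2.sub (hA.const_mul (2*p))).add (integrable_const _))
  have hB' : Integrable (fun ω => (qB ω - p)^2) μ := by
    have : (fun ω => (qB ω - p)^2) =
        fun ω => (qB ω)^2 - (2*p) * qB ω + p^2 := by
      funext ω; ring
    rw [this]
    exact ((hB2.sub (hB.const_mul (2*p))).add (integrable_const _))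
  have h : ∀ ω, κ * (qA ω - (qA ω + qB ω)/2) * (p - (qA ω + qB ω)/2)
      = (κ/4) * ((qB ω - p)^2 - (qA ω - p)^2) := by
    intro ω; ring
  simp_rw [h]
  rw [integral_const_mul, integral_sub hB' hA', hvA, hvB]
end

section
/- For real numbers p_true, p_gamb, L > 0 with p_true ∈ [p_gamb − L, p_gamb + L], the function F(x₁,x₂) = (x₂ − p_true)(p_gamb + L − x₂)² + (p_true − x₁)(x₁ − p_gamb + L)², restricted to p_gamb − L ≤ x₁ ≤ x₂ ≤ p_gamb + L, is maximized at x₁ = (2/3)p_true + (1/3)(p_gamb − L) and x₂ = (2/3)p_true + (1/3)(p_gamb + L). -/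
theorem bookmaker_optimal_spread
    (p_true p_gamb L : ℝ) (hL : 0 < L)
    (hp : p_true ∈ Set.Icc (p_gamb - L) (p_gamb + L))
    (F : ℝ → ℝ → ℝ)
    (hF : ∀ x₁ x₂, F x₁ x₂ =
      (x₂ - p_true) * (p_gamb + L - x₂)^2 + (p_true - x₁) * (x₁ - p_gamb + L)^2) :
    let x₁opt := (2/3) * p_true + (1/3) * (p_gamb - L)
    let x₂opt := (2/3) * p_true + (1/3) * (p_gamb + L)
    (p_gamb - L ≤ x₁opt ∧ x₁opt ≤ x₂opt ∧ x₂opt ≤ p_gamb + L) ∧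
    ∀ x₁ x₂, p_gamb - L ≤ x₁ → x₁ ≤ x₂ → x₂ ≤ p_gamb + L →
      F x₁ x₂ ≤ F x₁opt x₂opt := by
  obtain ⟨hp1, hp2⟩ := hp
  intro x₁opt x₂opt
  refine ⟨⟨by simp only [x₁opt]; linarith, by simp only [x₁opt, x₂opt]; linarith,
    by simp only [x₂opt]; linarith⟩, ?_⟩
  intro x₁ x₂ h1 h12 h2
  rw [hF, hF]
  have hg : (x₂ - p_true) * (p_gamb + L - x₂)^2 ≤
      (x₂opt - p_true) * (p_gamb + L - x₂opt)^2 := by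
    simp only [x₂opt]
    nlinarith [sq_nonneg (x₂ - ((2/3) * p_true + (1/3) * (p_gamb + L))),
      mul_nonneg (sq_nonneg (x₂ - ((2/3) * p_true + (1/3) * (p_gamb + L))))
        (by linarith : (0:ℝ) ≤ (4*(p_gamb + L) - p_true)/3 - x₂)]
  have hh : (p_true - x₁) * (x₁ - p_gamb + L)^2 ≤
      (p_true - x₁opt) * (x₁opt - p_gamb + L)^2 := by
    simp only [x₁opt]
    nlinarith [mul_nonneg (sq_nonneg (x₁ - ((2/3) * p_true + (1/3) * (p_gamb - L))))
        (by linarith : (0:ℝ) ≤ x₁ - (4*(p_gamb - L) - p_true)/3)]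
  linarith
end

section
/- Let ξ have Normal(0, σ²) distribution, σ > 0, and δ ∈ ℝ. Define the growth rate G = 2(δ² − ξ²) if ξ > −δ and G = 0 otherwise. Then E[G] = 2(δ² − σ²)Φ(δ/σ) + 2σδφ(δ/σ), where φ and Φ are the standard normal pdf and cdf. -/
open MeasureTheory ProbabilityTheory Real Filter Set
open scoped NNReal ENNReal Topology

noncomputable def stdNormalPdf (x : ℝ) : ℝ := (Real.sqrt (2 * Real.pi))⁻¹ * Real.exp (-x^2/2)

noncomputable def stdNormalCdf (y : ℝ) : ℝ := ∫ t in Set.Iic y, stdNormalPdf t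

theorem kelly_growth_rate (σ δ : ℝ) (hσ : 0 < σ) :
    ∫ x, (if x > -δ then 2 * (δ^2 - x^2) else 0)
        ∂(gaussianReal 0 ⟨σ^2, sq_nonneg σ⟩)
      = 2 * (δ^2 - σ^2) * stdNormalCdf (δ/σ) + 2 * σ * δ * stdNormalPdf (δ/σ) := by
  have hσ2 : (0:ℝ) < σ^2 := by positivity
  have hσne : σ ≠ 0 := hσ.ne'
  set v : ℝ≥0 := ⟨σ^2, sq_nonneg σ⟩ with hv
  have hvr : (v:ℝ) = σ^2 := rfl
  have hvne : v ≠ 0 := by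
    intro h
    have := congrArg (fun x : ℝ≥0 => (x:ℝ)) h
    simp [hvr] at this
    exact hσne this
  set c : ℝ := (Real.sqrt (2*π*σ^2))⁻¹ with hc
  set g : ℝ → ℝ := fun x => c * Real.exp (-x^2/(2*σ^2)) with hg
  have hgd : gaussianPDFReal 0 v = g := by
    ext x
    simp only [gaussianPDFReal, sub_zero, hvr, hg, hc]
  -- Step 1: unfold the gaussian measure
  have h1 : ∫ x, (if x > -δ then 2 * (δ^2 - x^2) else 0) ∂(gaussianReal 0 v)
      = ∫ x, g x * (if x > -δ then 2 * (δ^2 - x^2) else 0) := by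
    rw [gaussianReal_of_var_ne_zero 0 hvne]
    have hpdf : gaussianPDF 0 v = fun x => ((Real.toNNReal (gaussianPDFReal 0 v x) : ℝ≥0) : ℝ≥0∞) := by
      ext x; rfl
    rw [hpdf, integral_withDensity_eq_integral_smul ((measurable_gaussianPDFReal 0 v).real_toNNReal)]
    congr 1; ext x
    rw [NNReal.smul_def, Real.coe_toNNReal _ (gaussianPDFReal_nonneg 0 v x), hgd, smul_eq_mul]
  -- Step 2: restrict to Ioi (-δ)
  have h2 : ∫ x, g x * (if x > -δ then 2 * (δ^2 - x^2) else 0)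
      = ∫ x in Ioi (-δ), g x * (2 * (δ^2 - x^2)) := by
    rw [← integral_indicator measurableSet_Ioi]
    congr 1; ext x
    by_cases hx : -δ < x <;> simp [Set.indicator, hx]
  -- derivative fact
  have hderiv : ∀ x : ℝ, HasDerivAt (fun y => 2*σ^2*y*(g y)) (2*σ^2*(g x) - 2*x^2*(g x)) x := by
    intro x
    have h1' : HasDerivAt (fun y : ℝ => -y^2/(2*σ^2)) (-((2:ℕ)*x^1)/(2*σ^2)) x :=
      ((hasDerivAt_pow 2 x).neg).div_const _
    have hexp := h1'.exp
    have hgd' : HasDerivAt g (c * (Real.exp (-x^2/(2*σ^2)) * (-((2:ℕ)*x^1)/(2*σ^2)))) x :=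
      hexp.const_mul c
    have hlin : HasDerivAt (fun y : ℝ => 2*σ^2*y) (2*σ^2) x := by
      simpa using (hasDerivAt_id x).const_mul (2*σ^2)
    have this : HasDerivAt (fun y => 2*σ^2*y*(g y)) _ x := hlin.mul hgd'
    convert this using 1
    simp only [hg]
    field_simp
    ring
  -- integrability
  have hgint : Integrable g := hgd ▸ integrable_gaussianPDFReal 0 v
  have hb : (0:ℝ) < (2*σ^2)⁻¹ := by positivity
  have hx2g : Integrable (fun x => x^2 * g x) := by
    have h := (integrable_rpow_mul_exp_neg_mul_sq hb (s := 2) (by norm_num)).const_mul c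
    refine h.congr (ae_of_all _ fun x => ?_)
    have hr : x ^ (2:ℝ) = x ^ (2:ℕ) := by
      rw [show ((2:ℝ)) = ((2:ℕ):ℝ) by norm_num, Real.rpow_natCast]
    simp only [hg, hr]
    rw [show -(2*σ^2)⁻¹ * x^2 = -x^2/(2*σ^2) by field_simp]
    ring
  have hint : Integrable (fun x => 2*σ^2*(g x) - 2*x^2*(g x)) := by
    refine ((hgint.const_mul (2*σ^2)).sub ?_)
    have := hx2g.const_mul 2
    refine this.congr (ae_of_all _ fun x => ?_); ring
  -- limit at infinity
  have htend : Tendsto (fun x => 2*σ^2*x*(g x)) atTop (𝓝 0) := by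
    have h0 : Tendsto (fun x : ℝ => Real.exp (-(1/2)*x)) atTop (𝓝 0) := by
      apply Real.tendsto_exp_atBot.comp
      have h' : Tendsto (fun x : ℝ => -((1/2)*x)) atTop atBot :=
        tendsto_neg_atTop_atBot.comp (Tendsto.const_mul_atTop (by norm_num) tendsto_id)
      have hfe : (fun x : ℝ => -((1/2)*x)) = fun x : ℝ => -(1/2)*x := by
        ext x; ring
      rw [hfe] at h'
      exact h'
    have h2' := (rpow_mul_exp_neg_mul_sq_isLittleO_exp_neg hb 1).trans_tendsto h0
    have h3 : Tendsto (fun x : ℝ => x * Real.exp (-(2*σ^2)⁻¹ * x^2)) atTop (𝓝 0) := by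
      apply h2'.congr'
      filter_upwards [eventually_gt_atTop 0] with x hx
      rw [Real.rpow_one]
    have h4 := h3.const_mul (2*σ^2*c)
    rw [mul_zero] at h4
    refine h4.congr fun x => ?_
    simp only [hg]
    rw [show -(2*σ^2)⁻¹ * x^2 = -x^2/(2*σ^2) by field_simp]
    ring
  -- FTC on the tail
  have hFTC : ∫ x in Ioi (-δ), (2*σ^2*(g x) - 2*x^2*(g x)) = 0 - (2*σ^2*(-δ)*(g (-δ))) :=
    integral_Ioi_of_hasDerivAt_of_tendsto' (fun x _ => hderiv x) hint.integrableOn htend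
  -- pdf rescaling
  have h5 : ∀ t : ℝ, g (σ * t) = σ⁻¹ * stdNormalPdf t := by
    intro t
    have hs : Real.sqrt (2*π*σ^2) = σ * Real.sqrt (2*π) := by
      rw [show 2*π*σ^2 = σ^2 * (2*π) by ring, Real.sqrt_mul (sq_nonneg σ), Real.sqrt_sq hσ.le]
    have harg : -(σ*t)^2/(2*σ^2) = -t^2/2 := by field_simp
    simp only [hg, hc, stdNormalPdf, hs, harg, mul_inv]
    ring
  -- tail probability equals cdf
  have h6 : ∫ x in Ioi (-δ), g x = stdNormalCdf (δ/σ) := by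
    have h7 := integral_comp_mul_left_Ioi g (-(δ/σ)) hσ
    rw [show σ * -(δ/σ) = -δ by rw [mul_neg, mul_comm, div_mul_cancel₀ _ hσne]] at h7
    have h8 : ∫ t in Ioi (-(δ/σ)), g (σ * t) = ∫ t in Ioi (-(δ/σ)), σ⁻¹ * stdNormalPdf t := by
      congr 1; ext t; exact h5 t
    have h9 : ∫ t in Ioi (-(δ/σ)), stdNormalPdf t = stdNormalCdf (δ/σ) := by
      have heq : ∫ t in Ioi (-(δ/σ)), stdNormalPdf t = ∫ t in Ioi (-(δ/σ)), stdNormalPdf (-t) := by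
        congr 1; ext t; simp [stdNormalPdf, neg_sq]
      rw [heq, integral_comp_neg_Ioi, neg_neg]
      rfl
    rw [h8, integral_const_mul, h9] at h7
    have h7' : σ⁻¹ * stdNormalCdf (δ/σ) = σ⁻¹ * ∫ x in Ioi (-δ), g x := by
      simpa [smul_eq_mul] using h7
    have := mul_left_cancel₀ (inv_ne_zero hσne) h7'
    linarith [this]
  -- split the integral
  have hsplit : ∫ x in Ioi (-δ), g x * (2 * (δ^2 - x^2))
      = (2*δ^2-2*σ^2) * (∫ x in Ioi (-δ), g x) + ∫ x in Ioi (-δ), (2*σ^2*(g x) - 2*x^2*(g x)) := by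
    rw [← integral_const_mul, ← integral_add ((hgint.integrableOn).const_mul _) hint.integrableOn]
    congr 1; ext x; ring
  -- value of g at -δ
  have hgδ : g (-δ) = σ⁻¹ * stdNormalPdf (δ/σ) := by
    have := h5 (-(δ/σ))
    rw [show σ * -(δ/σ) = -δ by rw [mul_neg, mul_comm, div_mul_cancel₀ _ hσne]] at this
    rw [this]
    congr 1
    simp [stdNormalPdf, neg_sq]
  rw [h1, h2, hsplit, hFTC, h6, hgδ]
  field_simp
  ring
end
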